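/- Let (φ, ψ) be an n×n matrix factorization of f and (φ', ψ') an m×m matrix factorization of g. Then the pair of 2nm×2nm block-diagonal matrices ( diag(φ⊗φ', φ⊗φ'), diag(ψ⊗ψ', ψ⊗ψ') ) is a matrix factorization of fg, i.e., the multiplicative tensor product X ⊗̃ X' is an object of MF(K[[x,y]], fg) of size 2nm. -/
import Mathlib


open Matrix Kronecker

lemma kron_key {K : Type*} [Field K] {σ τ : Type*} {n m : ℕ}
    (f g : MvPowerSeries (σ ⊕ τ) K)
    (φ ψ : Matrix (Fin n) (Fin n) (MvPowerSeries (σ ⊕ τ) K))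
    (φ' ψ' : Matrix (Fin m) (Fin m) (MvPowerSeries (σ ⊕ τ) K))
    (h1 : φ * ψ = f • 1) (h3 : φ' * ψ' = g • 1) :
    (φ ⊗ₖ φ') * (ψ ⊗ₖ ψ') = (f * g) • 1 := by
  rw [← Matrix.mul_kronecker_mul, h1, h3, Matrix.smul_kronecker,
    Matrix.kronecker_smul, Matrix.one_kronecker_one, smul_smul]

/-- The multiplicative tensor product `X ⊗̃ X' = (diag(φ⊗φ', φ⊗φ'), diag(ψ⊗ψ', ψ⊗ψ'))`
is a `2nm×2nm` matrix factorization of `fg`. -/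
theorem mult_tensor_is_matrix_factorization
    {K : Type*} [Field K] {σ τ : Type*} {n m : ℕ}
    (f g : MvPowerSeries (σ ⊕ τ) K)
    (φ ψ : Matrix (Fin n) (Fin n) (MvPowerSeries (σ ⊕ τ) K))
    (φ' ψ' : Matrix (Fin m) (Fin m) (MvPowerSeries (σ ⊕ τ) K))
    (h1 : φ * ψ = f • 1) (h2 : ψ * φ = f • 1)
    (h3 : φ' * ψ' = g • 1) (h4 : ψ' * φ' = g • 1) :
    fromBlocks (φ ⊗ₖ φ') 0 0 (φ ⊗ₖ φ') * fromBlocks (ψ ⊗ₖ ψ') 0 0 (ψ ⊗ₖ ψ') =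
      (f * g) • 1 ∧
    fromBlocks (ψ ⊗ₖ ψ') 0 0 (ψ ⊗ₖ ψ') * fromBlocks (φ ⊗ₖ φ') 0 0 (φ ⊗ₖ φ') =
      (f * g) • 1 := by
  constructor <;>
  · rw [Matrix.fromBlocks_multiply]
    simp only [Matrix.mul_zero, Matrix.zero_mul, add_zero, zero_add,
      kron_key f g φ ψ φ' ψ' h1 h3, kron_key f g ψ φ ψ' φ' h2 h4]
    rw [← smul_zero (f*g), ← Matrix.fromBlocks_smul, Matrix.fromBlocks_one]
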